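/- Let b ∈ (0,1), σ₀ ≠ 0, μ₀ ≠ 0, r ∈ ℝ, w₁ ∈ ℝ, and let Φ : ℝ² → ℝ be continuous. Suppose (θ, x) : I → ℝ² is twice continuously differentiable on an open interval I and satisfies, for all t ∈ I, the controlled equations θ̈ + b cos θ · ẍ − sin θ = 0 and b cos θ · θ̈ + ẍ − b sin θ · θ̇² = u, where u = (b + r·detg/(μ₀·detĝ))(cos θ sin θ − sin θ · θ̇²) − (w₁·detg/(σ₀·detĝ))(x − (μ₀/σ₀) sin θ) + detg · Φ(θ,x)(μ₀ cos θ · θ̇ − σ₀ ẋ), with detg = 1 − b² cos²θ and detĝ = b/(σ₀ μ₀) + (b r/μ₀) cos²θ + σ₀ r/μ₀², and assume detĝ evaluated along the solution never vanishes. Then for all t ∈ I, d/dt [ ½(ĝ₁₁ θ̇² + 2 ĝ₁₂ θ̇ ẋ + ĝ₂₂ ẋ²) + V̂(θ,x) ] = − detĝ · Φ(θ,x) · (μ₀ cos θ · θ̇ − σ₀ ẋ)², where ĝ₁₁ = 1/σ₀ + r cos²θ, ĝ₁₂ = −(σ₀/μ₀) r cos θ, ĝ₂₂ = b/μ₀ +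 σ₀² r/μ₀², and V̂(θ,x) = (1/σ₀)(cos θ − 1) + (w₁/2)(x − (μ₀/σ₀) sin θ)². -/

import Mathlib

/-!
Statement 12: energy-dissipation identity for the inverted pendulum cart under
the nonlinear control law (17)–(18) of Auckly–Kapitanski–White:
`d/dt Ĥ = −detĝ · Φ(θ,x) · (μ₀ cos θ θ̇ − σ₀ ẋ)²` along solutions.
-/

noncomputable section

open Real Set

/-- `det g = 1 − b² cos²θ`. -/
def detg (b θ : ℝ) : ℝ := 1 - b ^ 2 * Real.cos θ ^ 2

/-- `det ĝ = b/(σ₀ μ₀) + (b r/μ₀) cos²θ + σ₀ r/μ₀²`. -/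
def detgh (b σ₀ μ₀ r θ : ℝ) : ℝ :=
  b / (σ₀ * μ₀) + (b * r / μ₀) * Real.cos θ ^ 2 + σ₀ * r / μ₀ ^ 2

/-- The nonlinear control law (17)–(18), as a function of the state
`(θ, x, θ', x')`. -/
def uctrl (b σ₀ μ₀ r w₁ : ℝ) (Φ : ℝ × ℝ → ℝ) (θ x θ' x' : ℝ) : ℝ :=
  (b + r * detg b θ / (μ₀ * detgh b σ₀ μ₀ r θ)) *
      (Real.cos θ * Real.sin θ - Real.sin θ * θ' ^ 2)
    - (w₁ * detg b θ / (σ₀ * detgh b σ₀ μ₀ r θ)) * (x - (μ₀ / σ₀) * Real.sin θ)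
    + detg b θ * Φ (θ, x) * (μ₀ * Real.cos θ * θ' - σ₀ * x')

set_option maxHeartbeats 4000000 in
theorem statement12 (b σ₀ μ₀ r w₁ : ℝ) (hb : b ∈ Ioo (0 : ℝ) 1)
    (hσ₀ : σ₀ ≠ 0) (hμ₀ : μ₀ ≠ 0)
    (Φ : ℝ × ℝ → ℝ) (hΦ : Continuous Φ)
    (a c : ℝ) (θ x : ℝ → ℝ)
    (hθ : ContDiffOn ℝ 2 θ (Ioo a c)) (hx : ContDiffOn ℝ 2 x (Ioo a c))
    (heq1 : ∀ t ∈ Ioo a c,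
      deriv (deriv θ) t + b * Real.cos (θ t) * deriv (deriv x) t
        - Real.sin (θ t) = 0)
    (heq2 : ∀ t ∈ Ioo a c,
      b * Real.cos (θ t) * deriv (deriv θ) t + deriv (deriv x) t
          - b * Real.sin (θ t) * (deriv θ t) ^ 2
        = uctrl b σ₀ μ₀ r w₁ Φ (θ t) (x t) (deriv θ t) (deriv x t))
    (hdet : ∀ t ∈ Ioo a c, detgh b σ₀ μ₀ r (θ t) ≠ 0) :
    ∀ t ∈ Ioo a c,
      deriv (fun s =>
        (1 / 2) * ((1 / σ₀ + r * Real.cos (θ s) ^ 2) * (deriv θ s) ^ 2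
            + 2 * (-(σ₀ / μ₀) * r * Real.cos (θ s)) * deriv θ s * deriv x s
            + (b / μ₀ + σ₀ ^ 2 * r / μ₀ ^ 2) * (deriv x s) ^ 2)
          + ((1 / σ₀) * (Real.cos (θ s) - 1)
            + (w₁ / 2) * (x s - (μ₀ / σ₀) * Real.sin (θ s)) ^ 2)) t
      = -detgh b σ₀ μ₀ r (θ t) * Φ (θ t, x t)
          * (μ₀ * Real.cos (θ t) * deriv θ t - σ₀ * deriv x t) ^ 2 := by

  intro t ht
  have hmem : Ioo a c ∈ nhds t := isOpen_Ioo.mem_nhds ht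
  -- differentiability
  have hθ1 : ContDiffOn ℝ 1 (deriv θ) (Ioo a c) :=
    hθ.deriv_of_isOpen isOpen_Ioo (by norm_num)
  have hx1 : ContDiffOn ℝ 1 (deriv x) (Ioo a c) :=
    hx.deriv_of_isOpen isOpen_Ioo (by norm_num)
  have h1 : HasDerivAt θ (deriv θ t) t :=
    (((hθ.differentiableOn (by norm_num)).differentiableAt hmem)).hasDerivAt
  have h2 : HasDerivAt x (deriv x t) t :=
    (((hx.differentiableOn (by norm_num)).differentiableAt hmem)).hasDerivAt
  have h3 : HasDerivAt (deriv θ) (deriv (deriv θ) t) t :=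
    (((hθ1.differentiableOn (by norm_num)).differentiableAt hmem)).hasDerivAt
  have h4 : HasDerivAt (deriv x) (deriv (deriv x) t) t :=
    (((hx1.differentiableOn (by norm_num)).differentiableAt hmem)).hasDerivAt
  set A := θ t with hA
  set B := x t with hB
  set A' := deriv θ t with hA'
  set B' := deriv x t with hB'
  set A'' := deriv (deriv θ) t with hA2
  set B'' := deriv (deriv x) t with hB2
  have hcos : HasDerivAt (fun s => Real.cos (θ s)) (-Real.sin A * A') t :=
    (Real.hasDerivAt_cos A).comp t h1
  have hsin : HasDerivAt (fun s => Real.sin (θ s)) (Real.cos A * A') t :=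
    (Real.hasDerivAt_sin A).comp t h1
  have H : HasDerivAt (fun s =>
      (1 / 2) * ((1 / σ₀ + r * Real.cos (θ s) ^ 2) * (deriv θ s) ^ 2
          + 2 * (-(σ₀ / μ₀) * r * Real.cos (θ s)) * deriv θ s * deriv x s
          + (b / μ₀ + σ₀ ^ 2 * r / μ₀ ^ 2) * (deriv x s) ^ 2)
        + ((1 / σ₀) * (Real.cos (θ s) - 1)
          + (w₁ / 2) * (x s - (μ₀ / σ₀) * Real.sin (θ s)) ^ 2))
    ((1/2) * ((2 * r * Real.cos A * (-Real.sin A * A')) * A' ^ 2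
        + (1 / σ₀ + r * Real.cos A ^ 2) * (2 * A' * A'')
        + 2 * (-(σ₀ / μ₀) * r * (-Real.sin A * A')) * A' * B'
        + 2 * (-(σ₀ / μ₀) * r * Real.cos A) * (A'' * B' + A' * B'')
        + (b / μ₀ + σ₀ ^ 2 * r / μ₀ ^ 2) * (2 * B' * B''))
      + ((1 / σ₀) * (-Real.sin A * A')
        + w₁ * (B - (μ₀ / σ₀) * Real.sin A)
          * (B' - (μ₀ / σ₀) * (Real.cos A * A')))) t := by
    have H0 :=
      ((((((hcos.pow 2).const_mul r).const_add (1 / σ₀)).mul (h3.pow 2)).add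
          ((((hcos.const_mul (-(σ₀ / μ₀) * r)).const_mul 2).mul h3).mul h4)).add
            (((h4.pow 2).const_mul (b / μ₀ + σ₀ ^ 2 * r / μ₀ ^ 2)))).const_mul (1 / 2)
    have H1 := ((hcos.sub_const 1).const_mul (1 / σ₀)).add
      (((h2.sub (hsin.const_mul (μ₀ / σ₀))).pow 2).const_mul (w₁ / 2))
    have H2 := H0.add H1
    refine H2.congr_deriv ?_
    simp only [Pi.pow_apply, Pi.mul_apply, Pi.sub_apply, Nat.add_one_sub_one, pow_one]
    push_cast
    ring
  rw [H.deriv]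
  have e1 := heq1 t ht
  have e2 := heq2 t ht
  have hD := hdet t ht
  have hD' : b / (σ₀ * μ₀) + b * r / μ₀ * Real.cos A ^ 2 + σ₀ * r / μ₀ ^ 2 ≠ 0 := by
    simpa [detgh] using hD
  have hdg : (1 : ℝ) - b ^ 2 * Real.cos A ^ 2 ≠ 0 := by
    obtain ⟨hb0, hb1⟩ := hb
    nlinarith [Real.cos_sq_le_one A, sq_nonneg (Real.cos A), sq_nonneg b]
  have hrepr : b / (σ₀ * μ₀) + b * r / μ₀ * Real.cos A ^ 2 + σ₀ * r / μ₀ ^ 2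
      = (b * μ₀ + b * r * σ₀ * μ₀ * Real.cos A ^ 2 + r * σ₀ ^ 2) / (σ₀ * μ₀ ^ 2) := by
    field_simp
  have hDp0 : b * μ₀ + b * r * σ₀ * μ₀ * Real.cos A ^ 2 + r * σ₀ ^ 2 ≠ 0 :=
    fun h0 => hD' (by rw [hrepr, h0, zero_div])
  have hE1 : b * r * Real.cos A ^ 2 * σ₀ * μ₀ ^ 4 + b * μ₀ ^ 4 + r * σ₀ ^ 2 * μ₀ ^ 3 ≠ 0 := by
    have hrw : b * r * Real.cos A ^ 2 * σ₀ * μ₀ ^ 4 + b * μ₀ ^ 4 + r * σ₀ ^ 2 * μ₀ ^ 3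
        = (b * μ₀ + b * r * σ₀ * μ₀ * Real.cos A ^ 2 + r * σ₀ ^ 2) * μ₀ ^ 3 := by ring
    rw [hrw]
    exact mul_ne_zero hDp0 (pow_ne_zero 3 hμ₀)
  have hE2 : b * r * Real.cos A ^ 2 * σ₀ ^ 3 * μ₀ ^ 3 + b * σ₀ ^ 2 * μ₀ ^ 3
      + r * σ₀ ^ 4 * μ₀ ^ 2 ≠ 0 := by
    have hrw : b * r * Real.cos A ^ 2 * σ₀ ^ 3 * μ₀ ^ 3 + b * σ₀ ^ 2 * μ₀ ^ 3 + r * σ₀ ^ 4 * μ₀ ^ 2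
        = (b * μ₀ + b * r * σ₀ * μ₀ * Real.cos A ^ 2 + r * σ₀ ^ 2) * (σ₀ ^ 2 * μ₀ ^ 2) := by ring
    rw [hrw]
    exact mul_ne_zero hDp0 (mul_ne_zero (pow_ne_zero 2 hσ₀) (pow_ne_zero 2 hμ₀))
  have hu : uctrl b σ₀ μ₀ r w₁ Φ A B A' B'
        * (σ₀ * (b * μ₀ + b * r * σ₀ * μ₀ * Real.cos A ^ 2 + r * σ₀ ^ 2))
      = b * (Real.cos A * Real.sin A - Real.sin A * A' ^ 2) * σ₀
            * (b * μ₀ + b * r * σ₀ * μ₀ * Real.cos A ^ 2 + r * σ₀ ^ 2)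
        + r * (1 - b ^ 2 * Real.cos A ^ 2)
            * (Real.cos A * Real.sin A - Real.sin A * A' ^ 2) * σ₀ ^ 2 * μ₀
        - w₁ * (1 - b ^ 2 * Real.cos A ^ 2) * (B - μ₀ / σ₀ * Real.sin A) * σ₀ * μ₀ ^ 2
        + (1 - b ^ 2 * Real.cos A ^ 2) * Φ (A, B)
            * (μ₀ * Real.cos A * A' - σ₀ * B') * σ₀
            * (b * μ₀ + b * r * σ₀ * μ₀ * Real.cos A ^ 2 + r * σ₀ ^ 2) := by
    set D := b * μ₀ + b * r * σ₀ * μ₀ * Real.cos A ^ 2 + r * σ₀ ^ 2 with hDdef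
    simp only [uctrl, detg, detgh]
    rw [hrepr]
    field_simp
  have hBG : B'' * (1 - b ^ 2 * Real.cos A ^ 2)
      = uctrl b σ₀ μ₀ r w₁ Φ A B A' B'
        - b * Real.cos A * Real.sin A + b * Real.sin A * A' ^ 2 := by
    linear_combination e2 - b * Real.cos A * e1
  have hAe : A'' = Real.sin A - b * Real.cos A * B'' := by
    linear_combination e1
  have hBp : B'' * ((1 - b ^ 2 * Real.cos A ^ 2) * σ₀
        * (b * μ₀ + b * r * σ₀ * μ₀ * Real.cos A ^ 2 + r * σ₀ ^ 2))
      = b * (Real.cos A * Real.sin A - Real.sin A * A' ^ 2) * σ₀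
            * (b * μ₀ + b * r * σ₀ * μ₀ * Real.cos A ^ 2 + r * σ₀ ^ 2)
        + r * (1 - b ^ 2 * Real.cos A ^ 2)
            * (Real.cos A * Real.sin A - Real.sin A * A' ^ 2) * σ₀ ^ 2 * μ₀
        - w₁ * (1 - b ^ 2 * Real.cos A ^ 2) * (B - μ₀ / σ₀ * Real.sin A) * σ₀ * μ₀ ^ 2
        + (1 - b ^ 2 * Real.cos A ^ 2) * Φ (A, B)
            * (μ₀ * Real.cos A * A' - σ₀ * B') * σ₀
            * (b * μ₀ + b * r * σ₀ * μ₀ * Real.cos A ^ 2 + r * σ₀ ^ 2)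
        - (b * Real.cos A * Real.sin A - b * Real.sin A * A' ^ 2) * σ₀
            * (b * μ₀ + b * r * σ₀ * μ₀ * Real.cos A ^ 2 + r * σ₀ ^ 2) := by
    linear_combination
      (σ₀ * (b * μ₀ + b * r * σ₀ * μ₀ * Real.cos A ^ 2 + r * σ₀ ^ 2)) * hBG + hu
  simp only [detgh]
  have hF : (1 - b ^ 2 * Real.cos A ^ 2) * σ₀
      * (b * μ₀ + b * r * σ₀ * μ₀ * Real.cos A ^ 2 + r * σ₀ ^ 2) ≠ 0 :=
    mul_ne_zero (mul_ne_zero hdg hσ₀) hDp0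
  apply mul_right_cancel₀ hF
  rw [hAe]
  linear_combination (norm := (field_simp; ring))
    (((1 / σ₀ + r * Real.cos A ^ 2) * A' + (-(σ₀ / μ₀) * r * Real.cos A) * B')
        * (-(b * Real.cos A))
      + ((-(σ₀ / μ₀) * r * Real.cos A) * A'
        + (b / μ₀ + σ₀ ^ 2 * r / μ₀ ^ 2) * B')) * hBp
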